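/- Let f^k : S → S' be a proper holomorphic branched covering of degree d ≥ 1 between topological disks, and let μ, μ' be nonatomic Borel measures such that μ'(f^k(E)) = 2^k μ(E) whenever f^k is injective on E. Then μ'(S') ≤ 2^k μ(S). -/

import Mathlib

open MeasureTheory Set

/-- Let `f^k : S → S'` be a proper holomorphic branched covering of degree `d ≥ 1` between
topological disks (open, connected, simply connected plane domains), and let `μ, μ'` be
finite nonatomic Borel measures such that `μ'(f^k(E)) = 2^k μ(E)` whenever `f^k` is
injective on the (measurable) set `E ⊆ S`.  Then `μ'(S') ≤ 2^k μ(S)`. -/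
theorem stmt19 (k d : ℕ) (hd : 1 ≤ d) (S S' : Set ℂ)
    (hS : IsOpen S) (hS' : IsOpen S')
    (hScon : IsConnected S) (hS'con : IsConnected S')
    (hSsc : SimplyConnectedSpace S) (hS'sc : SimplyConnectedSpace S')
    (f : ℂ → ℂ) (hf : DifferentiableOn ℂ f S)
    (hsurj : f '' S = S')
    (hproper : ∀ Kc : Set ℂ, Kc ⊆ S' → IsCompact Kc → IsCompact (S ∩ f ⁻¹' Kc))
    (hdeg : ∀ w ∈ S', ({z ∈ S | f z = w}).Finite ∧ ({z ∈ S | f z = w}).ncard ≤ d)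
    (μ μ' : Measure ℂ) [IsFiniteMeasure μ] [IsFiniteMeasure μ'] [NullSingletonClass μ']
    (hcomp : ∀ E : Set ℂ, E ⊆ S → MeasurableSet E → Set.InjOn f E →
      μ' (f '' E) = 2 ^ k * μ E) :
    μ' S' ≤ 2 ^ k * μ S := by
  classical
  have hA : AnalyticOnNhd ℂ f S := hf.analyticOnNhd hS
  have hA' : AnalyticOnNhd ℂ (deriv f) S := hA.deriv
  obtain ⟨z₀, hz₀⟩ := hScon.nonempty
  -- First: the derivative is not identically zero on S.
  by_cases hzero : ∀ z ∈ S, deriv f z = 0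
  · -- then f is constant, so S' is an open singleton: contradiction
    exfalso
    -- f is locally constant near z₀, hence constant on S by analytic continuation
    obtain ⟨r, hr, hball⟩ := Metric.isOpen_iff.1 hS z₀ hz₀
    have hconst : ∀ x ∈ Metric.ball z₀ r, f x = f z₀ := by
      intro x hx
      have hdiff : DifferentiableOn ℂ f (Metric.ball z₀ r) := hf.mono hball
      refine (convex_ball z₀ r).is_const_of_fderivWithin_eq_zero hdiff ?_ hx
        (Metric.mem_ball_self hr)
      intro y hy
      rw [fderivWithin_of_isOpen Metric.isOpen_ball hy]
      have h0 : deriv f y = 0 := hzero y (hball hy)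
      have : fderiv ℂ f y = ContinuousLinearMap.smulRight (1 : ℂ →L[ℂ] ℂ) (deriv f y) :=
        by rw [← toSpanSingleton_deriv]; ext; simp
      rw [this, h0]
      ext w
      simp
    have heq : EqOn f (fun _ => f z₀) S := by
      refine hA.eqOn_of_preconnected_of_eventuallyEq analyticOnNhd_const
        hScon.isPreconnected hz₀ ?_
      filter_upwards [Metric.ball_mem_nhds z₀ hr] with x hx using hconst x hx
    have hS'eq : S' = {f z₀} := by
      rw [← hsurj]
      apply Subset.antisymm
      · rintro w ⟨x, hx, rfl⟩
        simp [heq hx]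
      · rintro w (rfl : w = f z₀)
        exact ⟨z₀, hz₀, rfl⟩
    have hopen : IsOpen ({f z₀} : Set ℂ) := hS'eq ▸ hS'
    have hd : Dense ({f z₀}ᶜ : Set ℂ) := dense_compl_singleton _
    obtain ⟨x, hx1, hx2⟩ := hd.inter_open_nonempty _ hopen ⟨f z₀, rfl⟩
    exact hx2 hx1
  push_neg at hzero
  obtain ⟨z₁, hz₁S, hz₁⟩ := hzero
  -- the critical set
  set Z : Set ℂ := {z ∈ S | deriv f z = 0} with hZdef
  have hZsub : Z ⊆ S := fun z hz => hz.1
  -- each critical point is isolated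
  have hiso : ∀ z ∈ Z, ∀ᶠ x in nhdsWithin z {z}ᶜ, deriv f x ≠ 0 := by
    intro z hz
    rcases (hA' z hz.1).eventually_eq_zero_or_eventually_ne_zero with h | h
    · exfalso
      exact hz₁ (hA'.eqOn_zero_of_preconnected_of_eventuallyEq_zero
        hScon.isPreconnected hz.1 h hz₁S)
    · exact h
  -- Z is countable
  have hZcnt : Z.Countable := by
    have hdisc : DiscreteTopology ↥Z := by
      rw [discreteTopology_subtype_iff]
      intro x hx
      rw [Filter.inf_principal_eq_bot]
      filter_upwards [hiso x hx] with y hy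
      intro hyZ
      exact hy hyZ.2
    have : Countable ↥Z := TopologicalSpace.separableSpace_iff_countable.1 inferInstance
    exact Set.countable_coe_iff.2 this
  have hμ'Z : μ' (f '' Z) = 0 := (hZcnt.image f).measure_zero μ'
  -- local injectivity away from Z
  have hloc : ∀ z ∈ S \ Z, ∃ U : Set ℂ, IsOpen U ∧ z ∈ U ∧ U ⊆ S ∧ Set.InjOn f U := by
    intro z hz
    have hzS : z ∈ S := hz.1
    have hder : deriv f z ≠ 0 := fun h => hz.2 ⟨hzS, h⟩
    obtain ⟨p, hp⟩ := hA z hzS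
    have hs : HasStrictDerivAt f (p 1 fun _ => 1) z := hp.hasStrictDerivAt
    have hcoeff : (p 1 fun _ => 1) = deriv f z := hs.hasDerivAt.deriv.symm
    rw [hcoeff] at hs
    have he : HasStrictFDerivAt f _ z := hs.hasStrictFDerivAt_equiv hder
    refine ⟨(he.toOpenPartialHomeomorph f).source ∩ S,
      (he.toOpenPartialHomeomorph f).open_source.inter hS,
      ⟨he.mem_toOpenPartialHomeomorph_source, hzS⟩, inter_subset_right, ?_⟩
    have := (he.toOpenPartialHomeomorph f).injOn
    rw [he.toOpenPartialHomeomorph_coe] at this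
    exact this.mono inter_subset_left
  choose! U hUopen hUmem hUsub hUinj using hloc
  -- countable subcover of S \ Z by sets of injectivity
  set V : ↥(S \ Z) → Set ℂ := fun i => U (i : ℂ) with hVdef
  obtain ⟨T, hTc, hTU⟩ :=
    TopologicalSpace.isOpen_iUnion_countable V (fun i => hUopen _ i.2)
  have hcover : S \ Z ⊆ ⋃ i ∈ T, V i := by
    intro x hx
    rw [hTU]
    exact mem_iUnion.2 ⟨⟨x, hx⟩, hUmem x hx⟩
  -- enumerate the (countable) family by ℕ, throwing in the empty set
  obtain ⟨g, hg⟩ := ((hTc.image V).insert ∅).exists_eq_range (insert_nonempty _ _)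
  have hgmem : ∀ n, g n = ∅ ∨ ∃ i ∈ T, V i = g n := by
    intro n
    have : g n ∈ insert ∅ (V '' T) := by rw [hg]; exact mem_range_self n
    rcases this with h | h
    · exact Or.inl h
    · obtain ⟨i, hi, hieq⟩ := h
      exact Or.inr ⟨i, hi, hieq⟩
  have hgopen : ∀ n, IsOpen (g n) := by
    intro n
    rcases hgmem n with h | ⟨i, _, h⟩
    · rw [h]; exact isOpen_empty
    · rw [← h]; exact hUopen _ i.2
  have hgsub : ∀ n, g n ⊆ S := by
    intro n
    rcases hgmem n with h | ⟨i, _, h⟩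
    · rw [h]; exact empty_subset _
    · rw [← h]; exact hUsub _ i.2
  have hginj : ∀ n, Set.InjOn f (g n) := by
    intro n
    rcases hgmem n with h | ⟨i, _, h⟩
    · rw [h]; exact fun a ha => absurd ha (notMem_empty a)
    · rw [← h]; exact hUinj _ i.2
  have hgcover : S \ Z ⊆ ⋃ n, g n := by
    intro x hx
    obtain ⟨i, hiT, hi⟩ := mem_iUnion₂.1 (hcover hx)
    have : V i ∈ insert ∅ (V '' T) := mem_insert_of_mem _ ⟨i, hiT, rfl⟩
    rw [hg] at this
    obtain ⟨n, hn⟩ := this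
    exact mem_iUnion.2 ⟨n, hn ▸ hi⟩
  -- disjointify
  set F : ℕ → Set ℂ := disjointed g with hFdef
  have hFsub : ∀ n, F n ⊆ g n := fun n => disjointed_subset g n
  have hFmeas : ∀ n, MeasurableSet (F n) :=
    MeasurableSet.disjointed (fun n => (hgopen n).measurableSet)
  have hFdisj : Pairwise (Function.onFun Disjoint F) := disjoint_disjointed g
  have hFunion : ⋃ n, F n = ⋃ n, g n := iUnion_disjointed
  -- the final computation
  have step1 : μ' S' ≤ μ' (f '' Z) + μ' (f '' (S \ Z)) := by
    rw [← hsurj]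
    have : f '' S ⊆ f '' Z ∪ f '' (S \ Z) := by
      rw [← image_union, union_diff_cancel hZsub]
    exact le_trans (measure_mono this) (measure_union_le _ _)
  have step2 : μ' (f '' (S \ Z)) ≤ ∑' n, μ' (f '' F n) := by
    have hsub : f '' (S \ Z) ⊆ ⋃ n, f '' F n := by
      rw [← image_iUnion, hFunion]
      exact image_mono hgcover
    exact le_trans (measure_mono hsub) (measure_iUnion_le _)
  have step3 : ∑' n, μ' (f '' F n) = 2 ^ k * μ (⋃ n, F n) := by
    have : ∀ n, μ' (f '' F n) = 2 ^ k * μ (F n) := fun n =>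
      hcomp (F n) ((hFsub n).trans (hgsub n)) (hFmeas n) ((hginj n).mono (hFsub n))
    rw [tsum_congr this, ENNReal.tsum_mul_left, measure_iUnion hFdisj hFmeas]
  have step4 : μ (⋃ n, F n) ≤ μ S := by
    refine measure_mono ?_
    rw [hFunion]
    exact iUnion_subset hgsub
  calc μ' S' ≤ μ' (f '' Z) + μ' (f '' (S \ Z)) := step1
    _ = μ' (f '' (S \ Z)) := by rw [hμ'Z, zero_add]
    _ ≤ ∑' n, μ' (f '' F n) := step2
    _ = 2 ^ k * μ (⋃ n, F n) := step3
    _ ≤ 2 ^ k * μ S := mul_le_mul_right step4 _
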